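/- Let U = {1, u, v} where u, v are unit-magnitude complex numbers with u ≠ ±1, v ≠ ±1, u ≠ ±v, and let x = I_{u,v}(0,1). Then R(U) is a subring of ℂ if and only if x is a non-real quadratic integer, i.e., x ∉ ℝ and there exist λ, μ ∈ ℤ with x² = λ·x + μ. -/

import Mathlib

open Complex

/-- The bracket `[x,y] = x * conj y - y * conj x`. -/
noncomputable def brkt (x y : ℂ) : ℂ := x * (starRingEnd ℂ) y - y * (starRingEnd ℂ) x

/-- `lineInt α β p q` is the intersection point `I_{α,β}(p,q)` of the line through `p`
with direction `α` and the line through `q` with direction `β` (for unit `α ≠ ±β`),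
given by the formula of Buhler et al. -/
noncomputable def lineInt (α β p q : ℂ) : ℂ :=
  brkt α p / brkt α β * β + brkt β q / brkt β α * α

section helpers

variable {u v : ℂ}

/-- X is the explicit form of the intersection point x. -/
noncomputable def XX (u v : ℂ) : ℂ := u^2*(v^2-1)/(v^2-u^2)

lemma lineInt_swap (α β p q : ℂ) : lineInt α β p q = lineInt β α q p := add_comm _ _

lemma brkt_real (α : ℂ) (r s : ℝ) (z : ℂ) :
    brkt α ((r:ℂ) + (s:ℂ)*z) = (r:ℂ) * brkt α 1 + (s:ℂ) * brkt α z := by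
  unfold brkt
  simp only [map_add, map_mul, Complex.conj_ofReal, map_one]
  ring

lemma lineInt_self (p : ℂ) (h : (starRingEnd ℂ) u - u ≠ 0) : lineInt 1 u p p = p := by
  unfold lineInt brkt
  have h' : u - (starRingEnd ℂ) u ≠ 0 := fun hh => h (by linear_combination -hh)
  simp only [map_one, one_mul]
  field_simp
  ring

end helpers

section key

variable {u v : ℂ} (hu0 : u ≠ 0) (hv0 : v ≠ 0)
  (hcu : (starRingEnd ℂ) u = u⁻¹) (hcv : (starRingEnd ℂ) v = v⁻¹)
  (hu2 : u^2 ≠ 1) (hv2 : v^2 ≠ 1) (huv2 : v^2 ≠ u^2)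

include hu0 hv0 hcu hcv hu2 hv2 huv2

lemma conj_XX : (starRingEnd ℂ) (XX u v) = (v^2-1)/(v^2-u^2) := by
  have h1 : v^2 - u^2 ≠ 0 := sub_ne_zero.mpr huv2
  unfold XX
  simp only [map_div₀, map_mul, map_sub, map_pow, map_one, hcu, hcv]
  rw [div_eq_div_iff (by
    intro hh
    apply h1
    field_simp at hh
    linear_combination -hh) h1]
  field_simp
  ring

lemma brkt_one_XX : brkt 1 (XX u v) = (v^2-1)*(1-u^2)/(v^2-u^2) := by
  have h1 : v^2 - u^2 ≠ 0 := sub_ne_zero.mpr huv2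
  unfold brkt
  rw [conj_XX hu0 hv0 hcu hcv hu2 hv2 huv2]
  unfold XX
  field_simp
  simp

lemma brkt_one_u : brkt 1 u = (1-u^2)/u := by
  unfold brkt
  rw [map_one, hcu]
  field_simp

lemma brkt_one_v : brkt 1 v = (1-v^2)/v := by
  unfold brkt
  rw [map_one, hcv]
  field_simp

lemma brkt_u_one : brkt u 1 = (u^2-1)/u := by
  unfold brkt
  rw [map_one, hcu]
  field_simp

lemma brkt_v_one : brkt v 1 = (v^2-1)/v := by
  unfold brkt
  rw [map_one, hcv]
  field_simp

lemma brkt_u_XX : brkt u (XX u v) = 0 := by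
  have h1 : v^2 - u^2 ≠ 0 := sub_ne_zero.mpr huv2
  unfold brkt
  rw [conj_XX hu0 hv0 hcu hcv hu2 hv2 huv2, hcu]
  unfold XX
  field_simp
  ring

lemma brkt_v_XX : brkt v (XX u v) = (v^2-1)/v := by
  have h1 : v^2 - u^2 ≠ 0 := sub_ne_zero.mpr huv2
  unfold brkt
  rw [conj_XX hu0 hv0 hcu hcv hu2 hv2 huv2, hcv]
  unfold XX
  field_simp

lemma brkt_u_v : brkt u v = (u^2-v^2)/(u*v) := by
  unfold brkt
  rw [hcu, hcv]
  field_simp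

lemma brkt_v_u : brkt v u = (v^2-u^2)/(u*v) := by
  unfold brkt
  rw [hcu, hcv]
  field_simp

lemma keyL1 (a b c d : ℤ) :
    lineInt 1 u ((a:ℂ) + (b:ℂ)*(XX u v)) ((c:ℂ) + (d:ℂ)*(XX u v))
      = (c:ℂ) + (b:ℂ)*(XX u v) := by
  have h1 : v^2 - u^2 ≠ 0 := sub_ne_zero.mpr huv2
  have h2 : u^2 - 1 ≠ 0 := sub_ne_zero.mpr hu2
  have h3 : v^2 - 1 ≠ 0 := sub_ne_zero.mpr hv2
  have h1' : u^2 - v^2 ≠ 0 := fun hh => h1 (by linear_combination -hh)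
  have h2' : (1:ℂ) - u^2 ≠ 0 := fun hh => h2 (by linear_combination -hh)
  have h3' : (1:ℂ) - v^2 ≠ 0 := fun hh => h3 (by linear_combination -hh)
  have ha : ((a:ℤ):ℂ) = ((a:ℝ):ℂ) := by push_cast; ring
  have e0 : brkt 1 1 = 0 := by unfold brkt; simp
  have e1 : brkt u u = 0 := by unfold brkt; ring
  unfold lineInt
  rw [show ((a:ℂ) + (b:ℂ)*(XX u v)) = ((a:ℝ):ℂ) + ((b:ℝ):ℂ)*(XX u v) by push_cast; ring,
      show ((c:ℂ) + (d:ℂ)*(XX u v)) = ((c:ℝ):ℂ) + ((d:ℝ):ℂ)*(XX u v) by push_cast; ring,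
      brkt_real, brkt_real, e0,
      brkt_one_XX hu0 hv0 hcu hcv hu2 hv2 huv2,
      brkt_one_u hu0 hv0 hcu hcv hu2 hv2 huv2,
      brkt_u_one hu0 hv0 hcu hcv hu2 hv2 huv2,
      brkt_u_XX hu0 hv0 hcu hcv hu2 hv2 huv2]
  unfold XX
  push_cast
  field_simp
  ring

lemma keyL2 (a b c d : ℤ) :
    lineInt 1 v ((a:ℂ) + (b:ℂ)*(XX u v)) ((c:ℂ) + (d:ℂ)*(XX u v))
      = ((c+d-b : ℤ):ℂ) + (b:ℂ)*(XX u v) := by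
  have h1 : v^2 - u^2 ≠ 0 := sub_ne_zero.mpr huv2
  have h2 : u^2 - 1 ≠ 0 := sub_ne_zero.mpr hu2
  have h3 : v^2 - 1 ≠ 0 := sub_ne_zero.mpr hv2
  have h1' : u^2 - v^2 ≠ 0 := fun hh => h1 (by linear_combination -hh)
  have h2' : (1:ℂ) - u^2 ≠ 0 := fun hh => h2 (by linear_combination -hh)
  have h3' : (1:ℂ) - v^2 ≠ 0 := fun hh => h3 (by linear_combination -hh)
  have e0 : brkt 1 1 = 0 := by unfold brkt; simp
  unfold lineInt
  rw [show ((a:ℂ) + (b:ℂ)*(XX u v)) = ((a:ℝ):ℂ) + ((b:ℝ):ℂ)*(XX u v) by push_cast; ring,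
      show ((c:ℂ) + (d:ℂ)*(XX u v)) = ((c:ℝ):ℂ) + ((d:ℝ):ℂ)*(XX u v) by push_cast; ring,
      brkt_real, brkt_real, e0,
      brkt_one_XX hu0 hv0 hcu hcv hu2 hv2 huv2,
      brkt_one_v hu0 hv0 hcu hcv hu2 hv2 huv2,
      brkt_v_one hu0 hv0 hcu hcv hu2 hv2 huv2,
      brkt_v_XX hu0 hv0 hcu hcv hu2 hv2 huv2]
  unfold XX
  push_cast
  field_simp
  ring

lemma keyL3 (a b c d : ℤ) :
    lineInt u v ((a:ℂ) + (b:ℂ)*(XX u v)) ((c:ℂ) + (d:ℂ)*(XX u v))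
      = (a:ℂ) + ((c+d-a : ℤ):ℂ)*(XX u v) := by
  have h1 : v^2 - u^2 ≠ 0 := sub_ne_zero.mpr huv2
  have h2 : u^2 - 1 ≠ 0 := sub_ne_zero.mpr hu2
  have h3 : v^2 - 1 ≠ 0 := sub_ne_zero.mpr hv2
  have h1' : u^2 - v^2 ≠ 0 := fun hh => h1 (by linear_combination -hh)
  have h2' : (1:ℂ) - u^2 ≠ 0 := fun hh => h2 (by linear_combination -hh)
  have h3' : (1:ℂ) - v^2 ≠ 0 := fun hh => h3 (by linear_combination -hh)
  unfold lineInt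
  rw [show ((a:ℂ) + (b:ℂ)*(XX u v)) = ((a:ℝ):ℂ) + ((b:ℝ):ℂ)*(XX u v) by push_cast; ring,
      show ((c:ℂ) + (d:ℂ)*(XX u v)) = ((c:ℝ):ℂ) + ((d:ℝ):ℂ)*(XX u v) by push_cast; ring,
      brkt_real, brkt_real,
      brkt_u_one hu0 hv0 hcu hcv hu2 hv2 huv2,
      brkt_u_XX hu0 hv0 hcu hcv hu2 hv2 huv2,
      brkt_v_one hu0 hv0 hcu hcv hu2 hv2 huv2,
      brkt_v_XX hu0 hv0 hcu hcv hu2 hv2 huv2,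
      brkt_u_v hu0 hv0 hcu hcv hu2 hv2 huv2,
      brkt_v_u hu0 hv0 hcu hcv hu2 hv2 huv2]
  unfold XX
  push_cast
  field_simp
  ring

end key

/-- The sets `S n` in the inductive construction. -/
def stepSet (U : Set ℂ) : ℕ → Set ℂ
  | 0 => {0, 1}
  | n + 1 => {z | ∃ α ∈ U, ∃ β ∈ U, α ≠ β ∧ α ≠ -β ∧
      ∃ p ∈ stepSet U n, ∃ q ∈ stepSet U n, z = lineInt α β p q}

/-- `RU U = ⋃ n, S n`. -/
def RU (U : Set ℂ) : Set ℂ := ⋃ n, stepSet U n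

section main

variable {u v : ℂ} (hu1 : u ≠ 1) (hu1' : u ≠ -1)
  (hd : (starRingEnd ℂ) u - u ≠ 0)

include hu1 hu1' hd

lemma stepSet_mono_succ (n : ℕ) :
    stepSet {1, u, v} n ⊆ stepSet {1, u, v} (n+1) := by
  intro z hz
  exact ⟨1, Set.mem_insert _ _, u, by simp, Ne.symm hu1,
    fun h => hu1' (by rw [h]; ring), z, hz, z, hz, (lineInt_self z hd).symm⟩

lemma stepSet_mono {m n : ℕ} (h : m ≤ n) :
    stepSet {1, u, v} m ⊆ stepSet {1, u, v} n :=
  monotone_nat_of_le_succ (fun k => stepSet_mono_succ hu1 hu1' hd k) h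

lemma RU_step {α β : ℂ} (hα : α ∈ ({1, u, v} : Set ℂ)) (hβ : β ∈ ({1, u, v} : Set ℂ))
    (h1 : α ≠ β) (h2 : α ≠ -β) {p q : ℂ}
    (hp : p ∈ RU {1, u, v}) (hq : q ∈ RU {1, u, v}) :
    lineInt α β p q ∈ RU {1, u, v} := by
  obtain ⟨m, hm⟩ := Set.mem_iUnion.mp hp
  obtain ⟨n, hn⟩ := Set.mem_iUnion.mp hq
  refine Set.mem_iUnion.mpr ⟨(max m n) + 1, ?_⟩
  exact ⟨α, hα, β, hβ, h1, h2,
    p, stepSet_mono hu1 hu1' hd (le_max_left m n) hm,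
    q, stepSet_mono hu1 hu1' hd (le_max_right m n) hn, rfl⟩

end main

/-- Elementary monomials of `U`. -/
def IsElem (U : Set ℂ) (z : ℂ) : Prop :=
  ∃ α ∈ U, ∃ β ∈ U, α ≠ β ∧ α ≠ -β ∧ z = lineInt α β 0 1

/-- Monomials of `U`, defined inductively. -/
inductive IsMonomial (U : Set ℂ) : ℂ → Prop
  | elementary (α β : ℂ) (hα : α ∈ U) (hβ : β ∈ U) (h1 : α ≠ β) (h2 : α ≠ -β) :
      IsMonomial U (lineInt α β 0 1)
  | step (α β m : ℂ) (hα : α ∈ U) (hβ : β ∈ U) (h1 : α ≠ β) (h2 : α ≠ -β)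
      (hm : IsMonomial U m) : IsMonomial U (lineInt α β 0 m)

/-- `P`: the real numbers arising as length-two monomials `I_{γ,δ}(0,z)` on the real axis. -/
def projSet (U : Set ℂ) : Set ℝ :=
  {r | ∃ γ ∈ U, ∃ δ ∈ U, γ ≠ δ ∧ γ ≠ -δ ∧ ∃ z, IsElem U z ∧ (r : ℂ) = lineInt γ δ 0 z}

/-- `m` is a `ℤ[P]`-linear combination of elementary monomials of `U`. -/
def IsZPComb (U : Set ℂ) (m : ℂ) : Prop :=
  ∃ (n : ℕ) (c : Fin n → ℝ) (z : Fin n → ℂ),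
    (∀ i, c i ∈ Subring.closure (projSet U)) ∧ (∀ i, IsElem U (z i)) ∧
    m = ∑ i, (c i : ℂ) * z i

/-- for `U = {1, u, v}` with `1, u, v` pairwise non-±-equal and
`x = I_{u,v}(0,1)`, `R(U)` is a subring of `ℂ` iff `x` is a non-real quadratic integer. -/
theorem stmt7 (u v : ℂ) (hu : ‖u‖ = 1) (hv : ‖v‖ = 1)
    (hu1 : u ≠ 1) (hu1' : u ≠ -1) (hv1 : v ≠ 1) (hv1' : v ≠ -1)
    (huv : u ≠ v) (huv' : u ≠ -v)
    (x : ℂ) (hx : x = lineInt u v 0 1) :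
    (∃ A : Subring ℂ, (A : Set ℂ) = RU {1, u, v}) ↔
      (x.im ≠ 0 ∧ ∃ lam mu : ℤ, x ^ 2 = (lam : ℂ) * x + (mu : ℂ)) := by
  -- basic nonvanishing facts
  have hu0 : u ≠ 0 := fun h => by simp [h] at hu
  have hv0 : v ≠ 0 := fun h => by simp [h] at hv
  have hcu : (starRingEnd ℂ) u = u⁻¹ := (Complex.inv_eq_conj hu).symm
  have hcv : (starRingEnd ℂ) v = v⁻¹ := (Complex.inv_eq_conj hv).symm
  have hu2 : u^2 ≠ 1 := by
    intro h
    have h' : (u-1)*(u+1) = 0 := by linear_combination h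
    rcases mul_eq_zero.mp h' with h'' | h''
    · exact hu1 (by linear_combination h'')
    · exact hu1' (by linear_combination h'')
  have hv2 : v^2 ≠ 1 := by
    intro h
    have h' : (v-1)*(v+1) = 0 := by linear_combination h
    rcases mul_eq_zero.mp h' with h'' | h''
    · exact hv1 (by linear_combination h'')
    · exact hv1' (by linear_combination h'')
  have huv2 : v^2 ≠ u^2 := by
    intro h
    have h' : (u-v)*(u+v) = 0 := by linear_combination -h
    rcases mul_eq_zero.mp h' with h'' | h''
    · exact huv (by linear_combination h'')
    · exact huv' (by linear_combination h'')
  have h1 : v^2 - u^2 ≠ 0 := sub_ne_zero.mpr huv2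
  have h2 : u^2 - 1 ≠ 0 := sub_ne_zero.mpr hu2
  have h3 : v^2 - 1 ≠ 0 := sub_ne_zero.mpr hv2
  have hd : (starRingEnd ℂ) u - u ≠ 0 := by
    rw [hcu]
    intro h
    rw [sub_eq_zero] at h
    apply h2
    rw [sub_eq_zero, sq]
    field_simp at h
    linear_combination -h
  -- explicit formula for x
  have hb0 : brkt u 0 = 0 := by unfold brkt; simp
  have hxe : x = XX u v := by
    rw [hx]
    unfold lineInt
    rw [hb0, brkt_v_one hu0 hv0 hcu hcv hu2 hv2 huv2, brkt_v_u hu0 hv0 hcu hcv hu2 hv2 huv2]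
    unfold XX
    field_simp
    ring
  have hcx : (starRingEnd ℂ) x = (v^2-1)/(v^2-u^2) := by
    rw [hxe]; exact conj_XX hu0 hv0 hcu hcv hu2 hv2 huv2
  -- x is not real
  have him : x.im ≠ 0 := by
    intro h
    have hc : (starRingEnd ℂ) x = x := Complex.conj_eq_iff_im.mpr h
    rw [hcx, hxe] at hc
    unfold XX at hc
    rw [div_eq_div_iff h1 h1] at hc
    have h' : (u^2-1)*((v^2-1)*(v^2-u^2)) = 0 := by linear_combination -hc
    exact mul_ne_zero h2 (mul_ne_zero h3 h1) h'
  -- forward inclusion : RU ⊆ ℤ + ℤx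
  have hfwd : ∀ n, ∀ z ∈ stepSet ({1, u, v} : Set ℂ) n, ∃ a b : ℤ, z = (a:ℂ) + (b:ℂ)*x := by
    intro n
    induction n with
    | zero =>
      rintro z (rfl | rfl)
      · exact ⟨0, 0, by push_cast; ring⟩
      · exact ⟨1, 0, by push_cast; ring⟩
    | succ k ih =>
      rintro z ⟨α, hα, β, hβ, hne, hne', p, hp, q, hq, rfl⟩
      obtain ⟨a, b, rfl⟩ := ih p hp
      obtain ⟨c, d, rfl⟩ := ih q hq
      rw [hxe]
      simp only [Set.mem_insert_iff, Set.mem_singleton_iff] at hα hβ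
      rcases hα with rfl | rfl | rfl <;> rcases hβ with rfl | rfl | rfl
      · exact absurd rfl hne
      · exact ⟨c, b, keyL1 hu0 hv0 hcu hcv hu2 hv2 huv2 a b c d⟩
      · exact ⟨c+d-b, b, keyL2 hu0 hv0 hcu hcv hu2 hv2 huv2 a b c d⟩
      · exact ⟨a, d, by rw [lineInt_swap]; exact keyL1 hu0 hv0 hcu hcv hu2 hv2 huv2 c d a b⟩
      · exact absurd rfl hne
      · exact ⟨a, c+d-a, keyL3 hu0 hv0 hcu hcv hu2 hv2 huv2 a b c d⟩
      · exact ⟨a+b-d, d, by rw [lineInt_swap]; exact keyL2 hu0 hv0 hcu hcv hu2 hv2 huv2 c d a b⟩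
      · exact ⟨c, a+b-c, by rw [lineInt_swap]; exact keyL3 hu0 hv0 hcu hcv hu2 hv2 huv2 c d a b⟩
      · exact absurd rfl hne
  -- backward inclusion: every a + b x is reachable
  have Pcong : ∀ a a' b b' : ℤ, a = a' → b = b' →
      ((a:ℂ) + (b:ℂ)*x) ∈ RU {1, u, v} → ((a':ℂ) + (b':ℂ)*x) ∈ RU {1, u, v} := by
    rintro a a' b b' rfl rfl h; exact h
  have base0 : ((0:ℂ)) ∈ RU ({1, u, v} : Set ℂ) :=
    Set.mem_iUnion.mpr ⟨0, Or.inl rfl⟩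
  have base1 : ((1:ℂ)) ∈ RU ({1, u, v} : Set ℂ) :=
    Set.mem_iUnion.mpr ⟨0, Or.inr rfl⟩
  have h00 : ((0:ℤ):ℂ) + ((0:ℤ):ℂ)*x ∈ RU {1, u, v} := by
    have : ((0:ℤ):ℂ) + ((0:ℤ):ℂ)*x = 0 := by push_cast; ring
    rw [this]; exact base0
  have h10 : ((1:ℤ):ℂ) + ((0:ℤ):ℂ)*x ∈ RU {1, u, v} := by
    have : ((1:ℤ):ℂ) + ((0:ℤ):ℂ)*x = 1 := by push_cast; ring
    rw [this]; exact base1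
  have opf : ∀ a b c d : ℤ, ((a:ℂ) + (b:ℂ)*x) ∈ RU {1, u, v} →
      ((c:ℂ) + (d:ℂ)*x) ∈ RU {1, u, v} → ((c:ℂ) + (b:ℂ)*x) ∈ RU {1, u, v} := by
    intro a b c d hab hcd
    have := RU_step hu1 hu1' hd (Set.mem_insert _ _) (by simp : u ∈ ({1,u,v} : Set ℂ))
      (Ne.symm hu1) (fun h => hu1' (by rw [h]; ring)) hab hcd
    rwa [hxe, keyL1 hu0 hv0 hcu hcv hu2 hv2 huv2 a b c d, ← hxe] at this
  have opg : ∀ a b c d : ℤ, ((a:ℂ) + (b:ℂ)*x) ∈ RU {1, u, v} →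
      ((c:ℂ) + (d:ℂ)*x) ∈ RU {1, u, v} → (((c+d-b:ℤ):ℂ) + (b:ℂ)*x) ∈ RU {1, u, v} := by
    intro a b c d hab hcd
    have := RU_step hu1 hu1' hd (Set.mem_insert _ _) (by simp : v ∈ ({1,u,v} : Set ℂ))
      (Ne.symm hv1) (fun h => hv1' (by rw [h]; ring)) hab hcd
    rwa [hxe, keyL2 hu0 hv0 hcu hcv hu2 hv2 huv2 a b c d, ← hxe] at this
  have oph : ∀ a b c d : ℤ, ((a:ℂ) + (b:ℂ)*x) ∈ RU {1, u, v} →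
      ((c:ℂ) + (d:ℂ)*x) ∈ RU {1, u, v} → ((a:ℂ) + ((c+d-a:ℤ):ℂ)*x) ∈ RU {1, u, v} := by
    intro a b c d hab hcd
    have := RU_step hu1 hu1' hd (by simp : u ∈ ({1,u,v} : Set ℂ))
      (by simp : v ∈ ({1,u,v} : Set ℂ)) huv huv' hab hcd
    rwa [hxe, keyL3 hu0 hv0 hcu hcv hu2 hv2 huv2 a b c d, ← hxe] at this
  have h01 : ((0:ℤ):ℂ) + ((1:ℤ):ℂ)*x ∈ RU {1, u, v} :=
    Pcong _ _ _ _ (by ring) (by ring) (oph 0 0 1 0 h00 h10)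
  have hrow : ∀ n : ℤ, ((n:ℂ) + ((0:ℤ):ℂ)*x) ∈ RU {1, u, v} := by
    intro n
    induction n using Int.induction_on with
    | zero => exact h00
    | succ k ihk =>
      have hk1 : (((k:ℤ)):ℂ) + ((1:ℤ):ℂ)*x ∈ RU {1, u, v} := opf 0 1 k 0 h01 ihk
      exact Pcong _ _ _ _ (by ring) rfl (opg 0 0 k 1 h00 hk1)
    | pred k ihk =>
      have hk1 : (((-k-1:ℤ)):ℂ) + ((1:ℤ):ℂ)*x ∈ RU {1, u, v} :=
        Pcong _ _ _ _ (by ring) rfl (opg 0 1 (-k) 0 h01 ihk)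
      exact Pcong _ _ _ _ (by ring) rfl (opf 0 0 (-k-1) 1 h00 hk1)
  have hall : ∀ a b : ℤ, ((a:ℂ) + (b:ℂ)*x) ∈ RU {1, u, v} := by
    intro a b
    have hb : ((0:ℤ):ℂ) + (b:ℂ)*x ∈ RU {1, u, v} :=
      Pcong _ _ _ _ rfl (by ring) (oph 0 0 b 0 h00 (hrow b))
    exact opf 0 b a 0 hb (hrow a)
  -- the set identity
  have RUeq : RU ({1, u, v} : Set ℂ) = {z | ∃ a b : ℤ, z = (a:ℂ) + (b:ℂ)*x} := by
    apply Set.ext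
    intro z
    constructor
    · intro hz
      obtain ⟨n, hn⟩ := Set.mem_iUnion.mp hz
      exact hfwd n z hn
    · rintro ⟨a, b, rfl⟩
      exact hall a b
  constructor
  · rintro ⟨A, hA⟩
    refine ⟨him, ?_⟩
    have hxRU : x ∈ RU ({1, u, v} : Set ℂ) :=
      Set.mem_iUnion.mpr ⟨1, u, by simp, v, by simp, huv, huv',
        0, Or.inl rfl, 1, Or.inr rfl, hx⟩
    have hxA : x ∈ A := by
      have : x ∈ (A : Set ℂ) := by rw [hA]; exact hxRU
      exact this
    have hx2 : x^2 ∈ RU ({1, u, v} : Set ℂ) := by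
      rw [← hA]
      exact_mod_cast pow_mem hxA 2
    rw [RUeq] at hx2
    obtain ⟨a, b, hab⟩ := hx2
    exact ⟨b, a, by rw [hab]; ring⟩
  · rintro ⟨-, lam, mu, hq⟩
    refine ⟨{ carrier := {z | ∃ a b : ℤ, z = (a:ℂ) + (b:ℂ)*x},
              one_mem' := ⟨1, 0, by push_cast; ring⟩,
              zero_mem' := ⟨0, 0, by push_cast; ring⟩,
              mul_mem' := ?_, add_mem' := ?_, neg_mem' := ?_ }, ?_⟩
    · rintro p q ⟨a, b, rfl⟩ ⟨c, d, rfl⟩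
      exact ⟨a*c + b*d*mu, a*d + b*c + b*d*lam, by push_cast; linear_combination ((b:ℂ)*(d:ℂ))*hq⟩
    · rintro p q ⟨a, b, rfl⟩ ⟨c, d, rfl⟩
      exact ⟨a + c, b + d, by push_cast; ring⟩
    · rintro p ⟨a, b, rfl⟩
      exact ⟨-a, -b, by push_cast; ring⟩
    · rw [RUeq]
      rfl
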